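/- Let α ∈ [0,1], B > 0, σ > 0, and let P : ℝ → ℝ be a nonnegative integrable function supported on [0,B] with ∫_0^B P(s) ds = 1 and P(s) ≤ M for almost every s. Then the derivative R' of the regularizer R(r) = ∫_0^B ℓ_{1−α}(r, s)·P(s) ds + (σ/2)·r² is Lipschitz on ℝ with Lipschitz constant at most M + σ; in particular R is (M + σ)-smooth. -/

import Mathlib

/-- The quantile (pinball) loss `ℓ_{1-α}(r, s) = (α - 1{r < s})(r - s)`. -/
noncomputable def pinball (α r s : ℝ) : ℝ := (α - if r < s then 1 else 0) * (r - s)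

/-- If the prior density `P` on `[0, B]` is bounded a.e. by `M`, then the derivative
`R'(r) = F(r) - (1 - α) + σ r` of the IM-OCP regularizer
`R(r) = ∫_0^B ℓ_{1-α}(r, s) P(s) ds + (σ/2) r²` is Lipschitz with constant at most
`M + σ`; in particular `R` is `(M + σ)`-smooth. -/
theorem regularizer_derivative_lipschitz
    (α B σ M : ℝ) (hα : α ∈ Set.Icc (0 : ℝ) 1) (hB : 0 < B) (hσ : 0 < σ)
    (P : ℝ → ℝ)
    (hPnonneg : ∀ s, 0 ≤ P s)
    (hPint : MeasureTheory.IntegrableOn P (Set.Icc 0 B))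
    (hPsupp : ∀ s, s ∉ Set.Icc (0 : ℝ) B → P s = 0)
    (hP1 : ∫ s in (0 : ℝ)..B, P s = 1)
    (hPbdd : ∀ᵐ s ∂MeasureTheory.volume, P s ≤ M)
    (F : ℝ → ℝ) (hF : ∀ r, F r = ∫ s in Set.Iic r, P s)
    (R' : ℝ → ℝ) (hR' : ∀ r, R' r = F r - (1 - α) + σ * r) :
    ∀ x y : ℝ, |R' x - R' y| ≤ (M + σ) * |x - y| := by
  -- P is globally integrable
  have hPeq : P = Set.indicator (Set.Icc (0:ℝ) B) P := by
    funext s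
    by_cases h : s ∈ Set.Icc (0:ℝ) B
    · simp [Set.indicator_of_mem h]
    · simp [Set.indicator_of_notMem h, hPsupp s h]
  have hPglob : MeasureTheory.Integrable P := by
    rw [hPeq]
    exact hPint.integrable_indicator measurableSet_Icc
  -- key estimate for ordered points
  have key : ∀ x y : ℝ, y ≤ x → |R' x - R' y| ≤ (M + σ) * |x - y| := by
    intro x y hyx
    have hdiff : F x - F y = ∫ s in Set.Ioc y x, P s := by
      rw [hF, hF]
      rw [intervalIntegral.integral_Iic_sub_Iic (hPglob.integrableOn) (hPglob.integrableOn),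
        intervalIntegral.integral_of_le hyx]
    have hnn : 0 ≤ ∫ s in Set.Ioc y x, P s :=
      MeasureTheory.setIntegral_nonneg measurableSet_Ioc (fun s _ => hPnonneg s)
    have hub : (∫ s in Set.Ioc y x, P s) ≤ M * (x - y) := by
      have h1 : (∫ s in Set.Ioc y x, P s) ≤ ∫ _ in Set.Ioc y x, M :=
        MeasureTheory.setIntegral_mono_ae hPglob.integrableOn
          (MeasureTheory.integrableOn_const measure_Ioc_lt_top.ne) hPbdd
      have h2 : (∫ _ in Set.Ioc y x, (M:ℝ)) = M * (x - y) := by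
        simp [Real.volume_Ioc, ENNReal.toReal_ofReal (sub_nonneg.2 hyx), mul_comm, hyx]
      linarith
    have habs : |F x - F y| ≤ M * (x - y) := by
      rw [hdiff, abs_of_nonneg hnn]; exact hub
    rw [hR', hR']
    have hxy : |x - y| = x - y := abs_of_nonneg (sub_nonneg.2 hyx)
    rw [hxy]
    have : F x - (1 - α) + σ * x - (F y - (1 - α) + σ * y) = (F x - F y) + σ * (x - y) := by ring
    rw [this]
    calc |(F x - F y) + σ * (x - y)| ≤ |F x - F y| + |σ * (x - y)| := abs_add_le _ _
      _ ≤ M * (x - y) + σ * (x - y) := by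
          refine add_le_add habs ?_
          rw [abs_mul, abs_of_pos hσ, hxy]
      _ = (M + σ) * (x - y) := by ring
  intro x y
  rcases le_total y x with h | h
  · exact key x y h
  · rw [← abs_neg (R' x - R' y), ← abs_neg (x - y)]
    simpa [neg_sub] using key y x h
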